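/- arXiv:1704.05104 — 4 statements merged into one kernel-verified Lean document; each statement's English description precedes it below -/
import Mathlib

section
/- Let H be a complex Hilbert space and let A, K be bounded linear operators on H such that A is positive and the operator AK (the composition of A and K) is self-adjoint. Then for every x in H, |⟨AKx, x⟩| ≤ ‖K‖ · ⟨Ax, x⟩ (where ⟨Ax, x⟩ is a nonnegative real number). -/
open ComplexOrder ContinuousLinearMap
open scoped InnerProductSpace

lemma reid_cs {H : Type*} [NormedAddCommGroup H] [InnerProductSpace ℂ H]
    (A : H →L[ℂ] H) (hA : ∀ x : H, 0 ≤ (⟪A x, x⟫_ℂ))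
    (hsym : ∀ u v : H, ⟪A u, v⟫_ℂ = ⟪u, A v⟫_ℂ) (u v : H) :
    ‖(⟪A u, v⟫_ℂ)‖ ^ 2 ≤ (⟪A u, u⟫_ℂ).re * (⟪A v, v⟫_ℂ).re := by
  have h := InnerProductSpace.Core.inner_mul_inner_self_le (𝕜 := ℂ) (F := H)
    (c := { inner := fun a b => ⟪A a, b⟫_ℂ
            conj_inner_symm := fun a b => by
              rw [hsym a b, inner_conj_symm]
            re_inner_nonneg := fun a => by
              simpa using (Complex.le_def.mp (hA a)).1
            add_left := fun a b c => by simp [inner_add_left]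
            smul_left := fun a b r => by simp [inner_smul_left]; ring }) u v
  have h' : ‖⟪A u, v⟫_ℂ‖ * ‖⟪A v, u⟫_ℂ‖ ≤ (⟪A u, u⟫_ℂ).re * (⟪A v, v⟫_ℂ).re := h
  have hconj : ⟪A v, u⟫_ℂ = starRingEnd ℂ ⟪A u, v⟫_ℂ := by
    rw [hsym u v, inner_conj_symm]
  rw [hconj, RCLike.norm_conj, ← sq] at h'
  exact h'

/-- **Reid's inequality** (classical form): if `A` is a positive bounded operator on a
complex Hilbert space `H` and `A ∘ K` is self-adjoint, then
`|⟨AKx, x⟩| ≤ ‖K‖ · ⟨Ax, x⟩` for every `x ∈ H`. -/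
theorem reid_inequality
    {H : Type*} [NormedAddCommGroup H] [InnerProductSpace ℂ H] [CompleteSpace H]
    (A K : H →L[ℂ] H)
    (hA : ∀ x : H, 0 ≤ (inner ℂ (A x) x : ℂ))
    (hAK : IsSelfAdjoint (A ∘L K)) :
    ∀ x : H, ‖(inner ℂ ((A ∘L K) x) x : ℂ)‖ ≤ ‖K‖ * (inner ℂ (A x) x : ℂ).re := by
  intro x
  -- A is self-adjoint since it is positive (complex case)
  have hApos : A.IsPositive := by
    rw [isPositive_iff_complex]
    intro y
    obtain ⟨h1, h2⟩ := Complex.le_def.mp (hA y)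
    refine ⟨?_, by simpa using h1⟩
    apply Complex.ext <;> simp [← h2]
  have hAsym : ∀ u v : H, ⟪A u, v⟫_ℂ = ⟪u, A v⟫_ℂ := by
    intro u v
    exact (isSelfAdjoint_iff_isSymmetric.mp hApos.isSelfAdjoint) u v
  have hBsym : ∀ u v : H, ⟪A (K u), v⟫_ℂ = ⟪u, A (K v)⟫_ℂ := by
    intro u v
    exact (isSelfAdjoint_iff_isSymmetric.mp hAK) u v
  have hcs := reid_cs A hA hAsym
  set d : ℕ → ℕ → ℂ := fun i j => ⟪A ((K ^ i) x), (K ^ j) x⟫_ℂ with hd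
  have hpow : ∀ i : ℕ, (K ^ (i + 1)) x = K ((K ^ i) x) := by
    intro i; rw [pow_succ']; rfl
  have hd_symm : ∀ i j, ‖d i j‖ = ‖d j i‖ := by
    intro i j
    rw [show d i j = starRingEnd ℂ (d j i) from by
      simp only [hd, hAsym ((K ^ i) x) ((K ^ j) x)]
      exact (inner_conj_symm _ _).symm]
    exact RCLike.norm_conj _
  have hd_shift : ∀ i j, ‖d (i + 1) j‖ = ‖d (j + 1) i‖ := by
    intro i j
    have : d (i + 1) j = starRingEnd ℂ (d (j + 1) i) := by
      simp only [hd, hpow]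
      rw [hBsym ((K ^ i) x) ((K ^ j) x), ← inner_conj_symm]
    rw [this, RCLike.norm_conj]
  have hd_sum : ∀ j i, ‖d i j‖ = ‖d (i + j) 0‖ := by
    intro j
    induction j with
    | zero => intro i; rfl
    | succ j ih =>
      intro i
      rw [hd_symm i (j + 1), hd_shift j i, ih (i + 1)]
      congr 2
      omega
  -- diagonal values are nonnegative reals
  have hd_diag : ∀ m, (d m m).re = ‖d (2 * m) 0‖ := by
    intro m
    have h0 := hA ((K ^ m) x)
    obtain ⟨h1, h2⟩ := Complex.le_def.mp h0
    have him : (d m m).im = 0 := by rw [← h2, Complex.zero_im]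
    have : ‖d m m‖ = (d m m).re := by
      rw [Complex.norm_def, Complex.normSq_apply, him]
      simp only [mul_zero, add_zero]
      rw [Real.sqrt_mul_self (by rw [Complex.zero_re] at h1; exact h1)]
    rw [← this, hd_sum m m, two_mul]
  set t : ℝ := (⟪A x, x⟫_ℂ).re with ht
  have ht0 : 0 ≤ t := by
    obtain ⟨h1, h2⟩ := Complex.le_def.mp (hA x)
    simpa using h1
  set a : ℕ → ℝ := fun n => ‖d (2 ^ n) 0‖ with ha
  have ha0 : ∀ n, 0 ≤ a n := fun n => norm_nonneg _
  have key : ∀ n, a n ^ 2 ≤ a (n + 1) * t := by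
    intro n
    have h := hcs ((K ^ (2 ^ n)) x) x
    have e1 : (⟪A ((K ^ (2 ^ n)) x), x⟫_ℂ) = d (2 ^ n) 0 := by simp [hd]
    have e2 : (⟪A ((K ^ (2 ^ n)) x), (K ^ (2 ^ n)) x⟫_ℂ) = d (2 ^ n) (2 ^ n) := rfl
    rw [e1, e2] at h
    calc a n ^ 2 ≤ (d (2 ^ n) (2 ^ n)).re * t := h
      _ = a (n + 1) * t := by
          rw [hd_diag (2 ^ n), show 2 * 2 ^ n = 2 ^ (n + 1) from by rw [pow_succ]; ring]
  -- bound on a n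
  have hbound : ∀ n, a n ≤ ‖A‖ * ‖x‖ ^ 2 * ‖K‖ ^ (2 ^ n) := by
    intro n
    calc a n ≤ ‖A ((K ^ (2 ^ n)) x)‖ * ‖(K ^ (0 : ℕ)) x‖ := norm_inner_le_norm _ _
      _ = ‖A ((K ^ (2 ^ n)) x)‖ * ‖x‖ := by norm_num
      _ ≤ ‖A‖ * ‖(K ^ (2 ^ n)) x‖ * ‖x‖ := by
          gcongr; exact A.le_opNorm _
      _ ≤ ‖A‖ * (‖K ^ (2 ^ n)‖ * ‖x‖) * ‖x‖ := by
          gcongr; exact (K ^ (2 ^ n)).le_opNorm _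
      _ ≤ ‖A‖ * (‖K‖ ^ (2 ^ n) * ‖x‖) * ‖x‖ := by
          have hb : ‖K ^ (2 ^ n)‖ ≤ ‖K‖ ^ (2 ^ n) := norm_pow_le' K (by positivity)
          gcongr
      _ = ‖A‖ * ‖x‖ ^ 2 * ‖K‖ ^ (2 ^ n) := by ring
  -- the goal in terms of a 0
  have hgoal : ‖(inner ℂ ((A ∘L K) x) x : ℂ)‖ = a 0 := by
    have h1 : a 0 = ‖d 1 0‖ := by norm_num [ha]
    rw [h1]
    congr 1
  rw [hgoal]
  by_cases htz : t = 0
  · have h0 := key 0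
    rw [htz, mul_zero] at h0
    have : a 0 = 0 := by nlinarith [ha0 0, ha0 1]
    rw [this, htz, mul_zero]
  · have htpos : 0 < t := lt_of_le_of_ne ht0 (Ne.symm htz)
    by_cases hKz : ‖K‖ = 0
    · have : K = 0 := norm_eq_zero.mp hKz
      have : a 0 = 0 := by simp [ha, hd, this]
      rw [this, hKz, zero_mul]
    · have hKpos : 0 < ‖K‖ := lt_of_le_of_ne (norm_nonneg _) (Ne.symm hKz)
      by_contra hcon
      push_neg at hcon
      set r : ℝ := ‖K‖ * t with hr
      have hrpos : 0 < r := mul_pos hKpos htpos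
      -- growth: a 0 ^ (2^n) * t ≤ a n * t ^ (2^n)
      have growth : ∀ n, a 0 ^ (2 ^ n) * t ≤ a n * t ^ (2 ^ n) := by
        intro n
        induction n with
        | zero => simp
        | succ n ih =>
          have hexp : (2 : ℕ) ^ (n + 1) = 2 ^ n * 2 := by rw [pow_succ]
          rw [hexp, pow_mul, pow_mul]
          have H1 : (a 0 ^ 2 ^ n * t) ^ 2 ≤ (a n * t ^ 2 ^ n) ^ 2 :=
            pow_le_pow_left₀ (by positivity) ih 2
          have H2 : a n ^ 2 * (t ^ 2 ^ n) ^ 2 ≤ (a (n + 1) * t) * (t ^ 2 ^ n) ^ 2 :=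
            mul_le_mul_of_nonneg_right (key n) (by positivity)
          have H3 : (a 0 ^ 2 ^ n) ^ 2 * t * t ≤ a (n + 1) * (t ^ 2 ^ n) ^ 2 * t := by
            calc (a 0 ^ 2 ^ n) ^ 2 * t * t = (a 0 ^ 2 ^ n * t) ^ 2 := by ring
              _ ≤ (a n * t ^ 2 ^ n) ^ 2 := H1
              _ = a n ^ 2 * (t ^ 2 ^ n) ^ 2 := by ring
              _ ≤ (a (n + 1) * t) * (t ^ 2 ^ n) ^ 2 := H2
              _ = a (n + 1) * (t ^ 2 ^ n) ^ 2 * t := by ring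
          exact le_of_mul_le_mul_right H3 htpos
      -- combine with bound
      have main : ∀ n, a 0 ^ (2 ^ n) * t ≤ (‖A‖ * ‖x‖ ^ 2) * r ^ (2 ^ n) := by
        intro n
        calc a 0 ^ (2 ^ n) * t ≤ a n * t ^ (2 ^ n) := growth n
          _ ≤ (‖A‖ * ‖x‖ ^ 2 * ‖K‖ ^ (2 ^ n)) * t ^ (2 ^ n) :=
            mul_le_mul_of_nonneg_right (hbound n) (by positivity)
          _ = (‖A‖ * ‖x‖ ^ 2) * r ^ (2 ^ n) := by rw [hr, mul_pow]; ring
      -- derive contradiction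
      set ρ : ℝ := a 0 / r with hρ
      have hρ1 : 1 < ρ := (one_lt_div hrpos).mpr hcon
      obtain ⟨n, hn⟩ := pow_unbounded_of_one_lt (‖A‖ * ‖x‖ ^ 2 / t) hρ1
      have hle : ρ ^ n ≤ ρ ^ (2 ^ n) :=
        pow_le_pow_right₀ hρ1.le (Nat.le_of_lt (Nat.lt_two_pow_self (n := n)))
      have ha0r : a 0 = ρ * r := by rw [hρ, div_mul_cancel₀ _ hrpos.ne']
      have := main n
      rw [ha0r, mul_pow] at this
      have hrpow : 0 < r ^ (2 ^ n) := by positivity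
      have h1 : ρ ^ (2 ^ n) * t ≤ ‖A‖ * ‖x‖ ^ 2 := by
        have := (mul_le_mul_iff_of_pos_right hrpow).mp (by
          calc ρ ^ (2 ^ n) * t * r ^ (2 ^ n) = ρ ^ (2 ^ n) * r ^ (2 ^ n) * t := by ring
            _ ≤ (‖A‖ * ‖x‖ ^ 2) * r ^ (2 ^ n) := this)
        exact this
      have h2 : ρ ^ (2 ^ n) ≤ ‖A‖ * ‖x‖ ^ 2 / t := (le_div_iff₀ htpos).mpr h1
      have := lt_of_lt_of_le hn (le_trans hle h2)
      exact lt_irrefl _ this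
end

section
/- Let H be a complex Hilbert space and let A, K be bounded linear operators on H such that A is positive and the operator AK (the composition of A and K) is normal. Then for every x in H, |⟨AKx, x⟩| ≤ ‖K‖ · ⟨Ax, x⟩. -/
open ComplexOrder ContinuousLinearMap

section Aux

open CFC Filter
open scoped NNReal

variable {A : Type*} [CStarAlgebra A] [PartialOrder A] [StarOrderedRing A]

/-- Square root is operator monotone: invertible case. -/
lemma reid_le_of_sq_unit {a b : A} (ha : 0 ≤ a) (hb : 0 ≤ b) (hbu : IsUnit b)
    (h : a * a ≤ b * b) : a ≤ b := by
  nontriviality A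
  have hbs : 0 ∉ spectrum ℝ≥0 b := (spectrum.zero_notMem_iff ℝ≥0).mpr hbu
  have haa : 0 ≤ a * a := by
    nth_rewrite 1 [← (IsSelfAdjoint.of_nonneg ha).star_eq]
    exact star_mul_self_nonneg a
  have hbb : 0 ≤ b * b := by
    nth_rewrite 1 [← (IsSelfAdjoint.of_nonneg hb).star_eq]
    exact star_mul_self_nonneg b
  have key : (b*b) ^ (-(1/2) : ℝ) = b ^ (-1 : ℝ) := by
    have h2 : b * b = b ^ ((2:ℕ) : ℝ) := by rw [rpow_natCast b 2 hb, sq]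
    rw [h2, rpow_rpow b _ _ (by norm_num) (hbu.isStrictlyPositive hb)]
    norm_num
  have h1 : ‖a * b ^ (-1:ℝ)‖ ≤ 1 := by
    have := (le_iff_norm_sqrt_mul_rpow (a * a) (b * b) haa ((hbu.mul hbu).isStrictlyPositive hbb)).mp h
    rwa [sqrt_mul_self a ha, key] at this
  rw [le_iff_norm_sqrt_mul_rpow a b ha (hbu.isStrictlyPositive hb)]
  set c := sqrt a with hc_def
  set d := b ^ (-(1/2):ℝ) with hd_def
  have hc : 0 ≤ c := sqrt_nonneg a
  have hd : (0:A) ≤ d := rpow_nonneg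
  have hdd : d * d = b ^ (-1:ℝ) := by rw [hd_def, ← rpow_add hbu]; norm_num
  have hcc : c * c = a := sqrt_mul_sqrt_self a ha
  have hv : 0 ≤ d * a * d := conjugate_nonneg_of_nonneg ha hd
  have hnorm : ‖c * d‖ * ‖c * d‖ = ‖d * a * d‖ := by
    rw [← CStarRing.norm_star_mul_self, star_mul, (IsSelfAdjoint.of_nonneg hc).star_eq,
      (IsSelfAdjoint.of_nonneg hd).star_eq]
    congr 1
    rw [← hcc]; noncomm_ring
  have hval : ‖d * a * d‖ ≤ 1 := by
    rcases eq_or_ne ‖d * a * d‖ 0 with h0 | h0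
    · rw [h0]; norm_num
    · have hm : ‖d * a * d‖ ∈ spectrum ℝ (d * a * d) :=
        CStarAlgebra.norm_mem_spectrum_of_nonneg hv
      have hswap := spectrum.nonzero_mul_comm (𝕜 := ℝ) d (a * d)
      have hm' : ‖d * a * d‖ ∈ spectrum ℝ (a * d * d) := by
        have : ‖d * a * d‖ ∈ spectrum ℝ (d * (a * d)) \ {0} := by
          refine ⟨by rwa [← mul_assoc], h0⟩
        rw [hswap] at this
        simpa [mul_assoc] using this.1
      have := spectrum.norm_le_norm_of_mem hm'
      calc ‖d * a * d‖ ≤ |‖d * a * d‖| := le_abs_self _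
        _ = ‖(‖d * a * d‖)‖ := rfl
        _ ≤ ‖a * (d * d)‖ := by rwa [← mul_assoc]
        _ ≤ 1 := by rwa [hdd]
  calc ‖c * d‖ ≤ 1 := by nlinarith [norm_nonneg (c * d)]

/-- Square root is operator monotone. -/
lemma reid_le_of_sq {a b : A} (ha : 0 ≤ a) (hb : 0 ≤ b) (h : a * a ≤ b * b) : a ≤ b := by
  have key : ∀ ε : ℝ, 0 < ε → a ≤ b + algebraMap ℝ A ε := by
    intro ε hε
    set e := algebraMap ℝ A ε with he_def
    have he : (0:A) ≤ e := by
      rw [he_def, Algebra.algebraMap_eq_smul_one]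
      exact smul_nonneg hε.le zero_le_one
    have heu : IsUnit e := (isUnit_iff_ne_zero.mpr hε.ne').map (algebraMap ℝ A)
    have hbe : IsUnit (b + e) := CStarAlgebra.isUnit_of_le e (le_add_of_nonneg_left hb) (heu.isStrictlyPositive he)
    refine reid_le_of_sq_unit ha (add_nonneg hb he) hbe (h.trans ?_)
    have expand : (b + e) * (b + e) = b * b + (b * e + (e * b + e * e)) := by noncomm_ring
    rw [expand]
    refine le_add_of_nonneg_right ?_
    have hbe' : 0 ≤ b * e := by
      rw [he_def, Algebra.algebraMap_eq_smul_one, mul_smul_comm, mul_one]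
      exact smul_nonneg hε.le hb
    have heb : 0 ≤ e * b := by
      rw [he_def, Algebra.algebraMap_eq_smul_one, smul_mul_assoc, one_mul]
      exact smul_nonneg hε.le hb
    have hee : 0 ≤ e * e := by
      rw [he_def, Algebra.algebraMap_eq_smul_one, smul_mul_assoc, one_mul]
      exact smul_nonneg hε.le (smul_nonneg hε.le zero_le_one)
    positivity
  have tend : Tendsto (fun n : ℕ => b - a + algebraMap ℝ A (1 / (n + 1))) atTop (nhds (b - a)) := by
    have h1 : Tendsto (fun n : ℕ => (1:ℝ) / (n + 1)) atTop (nhds 0) :=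
      tendsto_one_div_add_atTop_nhds_zero_nat
    have h2 : Tendsto (fun n : ℕ => algebraMap ℝ A (1 / (n + 1))) atTop (nhds 0) := by
      have := ((continuous_algebraMap ℝ A).tendsto 0).comp h1
      simpa [Function.comp_def] using this
    simpa using tendsto_const_nhds.add h2
  have mem : ∀ n : ℕ, b - a + algebraMap ℝ A (1 / (n + 1)) ∈ {x : A | 0 ≤ x} := by
    intro n
    have := key (1 / (n + 1)) (by positivity)
    simp only [Set.mem_setOf_eq]
    rw [← sub_nonneg] at this
    convert this using 1
    abel
  have := CStarAlgebra.isClosed_nonneg (A := A) |>.mem_of_tendsto tend (Eventually.of_forall mem)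
  simpa [sub_nonneg] using this

omit [PartialOrder A] [StarOrderedRing A] in
lemma reid_absT_sq {T : A} (hT : IsStarNormal T) :
    cfc (fun z : ℂ => (‖z‖ : ℂ)) T * cfc (fun z : ℂ => (‖z‖ : ℂ)) T = T * star T := by
  rw [← cfc_mul _ _ T]
  have : T * star T = cfc (fun z : ℂ => z * star z) T := by
    rw [cfc_mul _ _ T, cfc_id' ℂ T, cfc_star _ T, cfc_id' ℂ T]
  rw [this]
  refine cfc_congr fun z _ => ?_
  rw [RCLike.star_def, Complex.mul_conj']
  norm_cast
  ring

lemma reid_absT_dom {T : A} (hT : IsStarNormal T) (c : ℂ) (hc : ‖c‖ = 1) :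
    c • T + star (c • T) ≤ (2:ℝ) • cfc (fun z : ℂ => (‖z‖ : ℂ)) T := by
  have h1 : c • T + star (c • T) = cfc (fun z : ℂ => c • z + star (c • z)) T := by
    rw [cfc_add (a := T) _ _, cfc_smul _ _ T, cfc_id' ℂ T, cfc_star _ T, cfc_smul _ _ T,
      cfc_id' ℂ T]
  rw [h1, ← cfc_smul (2:ℝ) _ T]
  refine cfc_mono fun z _ => ?_
  have : c • z + star (c • z) = ((2 * (c * z).re : ℝ) : ℂ) := by
    rw [smul_eq_mul, RCLike.star_def, Complex.add_conj]
  rw [this]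
  have h2 : (2:ℝ) • (‖z‖:ℂ) = ((2 * ‖z‖ : ℝ) : ℂ) := by
    push_cast
    rw [Complex.real_smul]
    push_cast
    ring
  rw [h2, Complex.real_le_real]
  have := Complex.re_le_norm (c * z)
  have habs : ‖c * z‖ = ‖z‖ := by
    rw [norm_mul]
    simp [hc]
  nlinarith [this, habs]

lemma reid_smul_nonneg {r : ℝ} (hr : 0 ≤ r) {a : A} (ha : 0 ≤ a) : 0 ≤ r • a :=
  smul_nonneg hr ha

lemma reid_smul_le {r : ℝ} (hr : 0 ≤ r) {a b : A} (h : a ≤ b) : r • a ≤ r • b :=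
  smul_le_smul_of_nonneg_left h hr

end Aux

/-- **Reid's inequality for normal products**: if `A` is a positive bounded operator on a
complex Hilbert space `H` and `A ∘ K` is normal (it commutes with its adjoint), then
`|⟨AKx, x⟩| ≤ ‖K‖ · ⟨Ax, x⟩` for every `x ∈ H`. -/
theorem reid_inequality_normal
    {H : Type*} [NormedAddCommGroup H] [InnerProductSpace ℂ H] [CompleteSpace H]
    (A K : H →L[ℂ] H)
    (hA : ∀ x : H, 0 ≤ (inner ℂ (A x) x : ℂ))
    (hAK : (A ∘L K) ∘L adjoint (A ∘L K) = adjoint (A ∘L K) ∘L (A ∘L K)) :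
    ∀ x : H, ‖(inner ℂ ((A ∘L K) x) x : ℂ)‖ ≤ ‖K‖ * (inner ℂ (A x) x : ℂ).re := by
  intro x
  set T : H →L[ℂ] H := A ∘L K with hT_def
  -- A is positive
  have hApos : A.IsPositive := by
    rw [isPositive_iff_complex]
    intro y
    obtain ⟨h1, h2⟩ := (Complex.le_def).mp (hA y)
    constructor
    · apply Complex.ext <;> simp [← h2]
    · simpa using h1
  have hA0 : (0 : H →L[ℂ] H) ≤ A := (nonneg_iff_isPositive A).mpr hApos
  have hAsa : IsSelfAdjoint A := hApos.isSelfAdjoint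
  -- T is normal
  have hTnormal : IsStarNormal T := by
    constructor
    rw [Commute, SemiconjBy, star_eq_adjoint, mul_def, mul_def, ← hAK]
  -- T * star T = A * (K * star K) * A
  have hTT : T * star T = A * (K * star K) * A := by
    rw [star_eq_adjoint, hT_def, adjoint_comp, hAsa.adjoint_eq]
    rw [mul_def, mul_def, mul_def]
    ext y; simp [comp_apply, star_eq_adjoint]
  -- the positive operator |T|
  set P : H →L[ℂ] H := cfc (fun z : ℂ => (‖z‖ : ℂ)) T with hP_def
  have hP0 : (0 : H →L[ℂ] H) ≤ P := cfc_nonneg fun z _ => by positivity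
  set b : H →L[ℂ] H := ‖K‖ • A with hb_def
  have hb0 : (0 : H →L[ℂ] H) ≤ b := reid_smul_nonneg (norm_nonneg K) hA0
  -- P ≤ b
  have hPb : P ≤ b := by
    refine reid_le_of_sq hP0 hb0 ?_
    rw [reid_absT_sq hTnormal, hTT]
    have h1 : K * star K ≤ algebraMap ℝ (H →L[ℂ] H) (‖K‖ ^ 2) :=
      CStarAlgebra.mul_star_le_algebraMap_norm_sq
    calc A * (K * star K) * A ≤ A * algebraMap ℝ (H →L[ℂ] H) (‖K‖ ^ 2) * A :=
          conjugate_le_conjugate_of_nonneg h1 hA0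
      _ = b * b := by
          rw [hb_def, Algebra.algebraMap_eq_smul_one]
          simp only [mul_smul_comm, smul_mul_assoc, mul_one, smul_smul]
          rw [sq]
  -- choose a phase
  set w : ℂ := inner ℂ (T x) x with hw_def
  rcases eq_or_ne w 0 with hw0 | hw0
  · rw [hw0]
    simp only [norm_zero]
    have := hApos.re_inner_nonneg_left x
    positivity
  · have habsw : ‖w‖ ≠ 0 := by
      simpa using hw0
    set c : ℂ := w / (‖w‖ : ℂ) with hc_def
    have hc_norm : ‖c‖ = 1 := by
      rw [hc_def]
      rw [norm_div, Complex.norm_real, norm_norm]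
      field_simp
    have hdom := reid_absT_dom hTnormal c hc_norm
    have hchain : c • T + star (c • T) ≤ (2:ℝ) • b :=
      hdom.trans (reid_smul_le (by norm_num) hPb)
    -- evaluate at x
    have hpos := ((le_def _ _).mp hchain).re_inner_nonneg_left x
    rw [sub_apply, inner_sub_left, map_sub, sub_nonneg] at hpos
    have hkey1 : (starRingEnd ℂ) c * w = (‖w‖ : ℂ) := by
      rw [hc_def, map_div₀, Complex.conj_ofReal, div_mul_eq_mul_div,
        ← Complex.normSq_eq_conj_mul_self, Complex.normSq_eq_norm_sq]
      push_cast
      rw [sq, mul_div_assoc, div_self (by exact_mod_cast habsw), mul_one]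
    have hkey2 : c * (starRingEnd ℂ) w = (‖w‖ : ℂ) := by
      rw [hc_def, div_mul_eq_mul_div, Complex.mul_conj, Complex.normSq_eq_norm_sq]
      push_cast
      rw [sq, mul_div_assoc, div_self (by exact_mod_cast habsw), mul_one]
    have lhs_eval : RCLike.re (inner ℂ (((c • T) + star (c • T)) x) x : ℂ)
        = 2 * ‖w‖ := by
      rw [add_apply, inner_add_left, smul_apply, inner_smul_left]
      have hstar : (inner ℂ ((star (c • T)) x) x : ℂ) = c * (starRingEnd ℂ) w := by
        rw [star_eq_adjoint, adjoint_inner_left, smul_apply, inner_smul_right, hw_def,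
          ← inner_conj_symm x (T x)]
      rw [hstar, ← hw_def, hkey1, hkey2, map_add]
      simp [RCLike.re_to_complex]
      ring
    have rhs_eval : RCLike.re (inner ℂ (((2:ℝ) • b) x) x : ℂ)
        = 2 * (‖K‖ * (inner ℂ (A x) x : ℂ).re) := by
      rw [hb_def]
      have h2 : ((2:ℝ) • (‖K‖ • A)) x = ((2 * ‖K‖ : ℝ) : ℂ) • A x := by
        simp [smul_smul]
        rw [← Complex.coe_smul]; push_cast
        rfl
      rw [h2, inner_smul_left]
      simp [Complex.conj_ofReal, RCLike.re_to_complex, Complex.mul_re]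
      ring
    rw [lhs_eval, rhs_eval] at hpos
    linarith
end

section
/- Let H be a complex Hilbert space and let A, K be bounded linear operators on H with A positive. Then |(AK)*| ≤ ‖K‖ A, i.e., ‖K‖ A − |(AK)*| is a positive operator. -/
open ComplexOrder ContinuousLinearMap Filter
open scoped NNReal ENNReal Topology

private lemma my_spectralRadius_mul_comm {A : Type*} [Ring A] [Algebra ℂ A] (a b : A) :
    spectralRadius ℂ (a * b) = spectralRadius ℂ (b * a) := by
  have key : ∀ x y : A, spectralRadius ℂ (x * y) ≤ spectralRadius ℂ (y * x) := by
    intro x y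
    rw [spectralRadius, spectralRadius]
    refine iSup₂_le fun k hk => ?_
    rcases eq_or_ne k 0 with rfl | h
    · simp
    · have hk' : k ∈ spectrum ℂ (y * x) := by
        have h2 := spectrum.nonzero_mul_comm (𝕜 := ℂ) x y
        have h3 : k ∈ spectrum ℂ (y * x) \ {0} := h2 ▸ ⟨hk, h⟩
        exact h3.1
      exact le_iSup₂ (f := fun k (_ : k ∈ spectrum ℂ (y * x)) => (‖k‖₊ : ℝ≥0∞)) k hk'
  exact le_antisymm (key a b) (key b a)

/-- Operator monotonicity of the square root for an invertible upper bound. -/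
private lemma my_le_of_sq_le_sq_unit {A : Type*} [CStarAlgebra A] [PartialOrder A]
    [StarOrderedRing A] {a : A} {b : Aˣ} (ha : 0 ≤ a) (hb : 0 ≤ (b : A))
    (hab : a * a ≤ (b : A) * (b : A)) : a ≤ (b : A) := by
  rcases subsingleton_or_nontrivial A with hsub | hnt
  · exact le_of_eq (Subsingleton.elim _ _)
  have hbinv : (0 : A) ≤ (↑b⁻¹ : A) := CFC.inv_nonneg_of_nonneg b hb
  have haa : (0 : A) ≤ a * a := (IsSelfAdjoint.of_nonneg ha).mul_self_nonneg
  have h1 : (↑b⁻¹ : A) * (a * a) * ↑b⁻¹ ≤ (↑b⁻¹ : A) * ((b : A) * b) * ↑b⁻¹ :=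
    conjugate_le_conjugate_of_nonneg hab hbinv
  have h2 : (↑b⁻¹ : A) * ((b : A) * (b : A)) * (↑b⁻¹ : A) = 1 := by
    have e : (↑b⁻¹ : A) * ((b : A) * (b : A)) * (↑b⁻¹ : A)
        = ((↑b⁻¹ : A) * (b : A)) * ((b : A) * (↑b⁻¹ : A)) := by noncomm_ring
    rw [e, Units.inv_mul, one_mul, Units.mul_inv]
  have h3 : ‖a * (↑b⁻¹ : A)‖ ≤ 1 := by
    have hpos : (0 : A) ≤ (↑b⁻¹ : A) * (a * a) * ↑b⁻¹ := conjugate_nonneg_of_nonneg haa hbinv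
    have hle1 : (↑b⁻¹ : A) * (a * a) * ↑b⁻¹ ≤ 1 := h2 ▸ h1
    have hn : ‖(↑b⁻¹ : A) * (a * a) * ↑b⁻¹‖ ≤ 1 :=
      (CStarAlgebra.norm_le_one_iff_of_nonneg _ hpos).mpr hle1
    have hsq : ‖a * (↑b⁻¹ : A)‖ * ‖a * (↑b⁻¹ : A)‖ = ‖(↑b⁻¹ : A) * (a * a) * (↑b⁻¹ : A)‖ := by
      rw [← CStarRing.norm_star_mul_self]
      congr 1
      rw [star_mul, (IsSelfAdjoint.of_nonneg ha).star_eq, (IsSelfAdjoint.of_nonneg hbinv).star_eq]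
      noncomm_ring
    nlinarith [norm_nonneg (a * (↑b⁻¹ : A))]
  set s := CFC.sqrt a with hs
  set t := CFC.sqrt (↑b⁻¹ : A) with ht
  have hs0 : (0 : A) ≤ s := CFC.sqrt_nonneg (a := a)
  have ht0 : (0 : A) ≤ t := CFC.sqrt_nonneg (a := (↑b⁻¹ : A))
  have hss : s * s = a := CFC.sqrt_mul_sqrt_self a ha
  have htt : t * t = (↑b⁻¹ : A) := CFC.sqrt_mul_sqrt_self _ hbinv
  have htatpos : (0 : A) ≤ t * a * t := conjugate_nonneg_of_nonneg ha ht0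
  have hsa_tat : IsSelfAdjoint (t * a * t) := IsSelfAdjoint.of_nonneg htatpos
  have hr : (‖t * a * t‖₊ : ℝ≥0∞) ≤ 1 := by
    rw [← hsa_tat.spectralRadius_eq_nnnorm]
    have h4 : spectralRadius ℂ (t * a * t) = spectralRadius ℂ (a * (↑b⁻¹ : A)) := by
      rw [show t * a * t = t * (a * t) from by rw [mul_assoc], my_spectralRadius_mul_comm,
        show a * t * t = a * (↑b⁻¹ : A) from by rw [mul_assoc, htt]]
    rw [h4]
    calc spectralRadius ℂ (a * (↑b⁻¹ : A)) ≤ ‖a * (↑b⁻¹ : A)‖₊ :=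
          spectrum.spectralRadius_le_nnnorm _
      _ ≤ 1 := by
          rw [← ENNReal.coe_one, ENNReal.coe_le_coe, ← NNReal.coe_le_coe]
          simpa using h3
  have hnorm_tat : ‖t * a * t‖ ≤ 1 := by
    rw [← ENNReal.coe_one, ENNReal.coe_le_coe, ← NNReal.coe_le_coe] at hr
    simpa using hr
  rw [le_iff_norm_sqrt_mul_sqrt_inv ha hb]
  show ‖s * t‖ ≤ 1
  have hstst : ‖s * t‖ * ‖s * t‖ = ‖t * a * t‖ := by
    rw [← CStarRing.norm_star_mul_self, star_mul, (IsSelfAdjoint.of_nonneg hs0).star_eq,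
      (IsSelfAdjoint.of_nonneg ht0).star_eq,
      show t * s * (s * t) = t * (s * s) * t from by noncomm_ring, hss]
  nlinarith [norm_nonneg (s * t)]

private lemma my_algebraMap_nonneg {A : Type*} [CStarAlgebra A] [PartialOrder A]
    [StarOrderedRing A] {r : ℝ} (hr : 0 ≤ r) : (0 : A) ≤ algebraMap ℝ A r := by
  have : algebraMap ℝ A r = star (algebraMap ℝ A (Real.sqrt r)) * algebraMap ℝ A (Real.sqrt r) := by
    rw [(IsSelfAdjoint.algebraMap A (isSelfAdjoint_iff.mpr (star_trivial _))).star_eq,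
      ← map_mul, Real.mul_self_sqrt hr]
  rw [this]
  exact star_mul_self_nonneg _

private lemma my_mul_algebraMap_nonneg {A : Type*} [CStarAlgebra A] [PartialOrder A]
    [StarOrderedRing A] {a : A} (ha : 0 ≤ a) {r : ℝ} (hr : 0 ≤ r) :
    0 ≤ a * algebraMap ℝ A r ∧ 0 ≤ algebraMap ℝ A r * a := by
  set d := algebraMap ℝ A (Real.sqrt r) with hd
  have hdsa : IsSelfAdjoint d := IsSelfAdjoint.algebraMap A (isSelfAdjoint_iff.mpr (star_trivial _))
  have hdd : d * d = algebraMap ℝ A r := by rw [hd, ← map_mul, Real.mul_self_sqrt hr]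
  have hcomm : d * a = a * d := (Algebra.commutes _ a)
  have key : (0 : A) ≤ d * a * d := by
    simpa [hdsa.star_eq] using star_left_conjugate_nonneg ha d
  have e1 : a * algebraMap ℝ A r = d * a * d := by
    conv_lhs => rw [← hdd, ← mul_assoc, ← hcomm]
  have e2 : algebraMap ℝ A r * a = d * a * d := by
    conv_lhs => rw [← hdd, mul_assoc, hcomm, ← mul_assoc]
  exact ⟨e1 ▸ key, e2 ▸ key⟩

/-- Operator monotonicity of the square root: if `0 ≤ a`, `0 ≤ b` and `a² ≤ b²`, then
`a ≤ b` in a unital C⋆-algebra. -/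
private lemma my_le_of_sq_le_sq {A : Type*} [CStarAlgebra A] [PartialOrder A] [StarOrderedRing A]
    {a b : A} (ha : 0 ≤ a) (hb : 0 ≤ b) (hab : a * a ≤ b * b) : a ≤ b := by
  have key : ∀ ε : ℝ, 0 < ε → a ≤ b + algebraMap ℝ A ε := by
    intro ε hε
    set c := algebraMap ℝ A ε with hc
    have hc0 : (0 : A) ≤ c := my_algebraMap_nonneg hε.le
    have hunit : IsUnit (b + c) := by
      refine (fun hu hab => CStarAlgebra.isUnit_of_le c hab
        (IsStrictlyPositive.iff_of_unital.mpr ⟨hc0, hu⟩)) ?_ ?_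
      · exact (IsUnit.mk0 ε hε.ne').map (algebraMap ℝ A)
      · exact (le_add_iff_nonneg_left _).mpr hb
    obtain ⟨u, hu⟩ := hunit
    have hbu : (0 : A) ≤ (u : A) := by rw [hu]; exact add_nonneg hb hc0
    have habu : a * a ≤ (u : A) * (u : A) := by
      rw [hu]
      calc a * a ≤ b * b := hab
        _ ≤ b * b + (b * c + (c * b + c * c)) := by
            refine le_add_of_nonneg_right ?_
            exact add_nonneg (my_mul_algebraMap_nonneg hb hε.le).1
              (add_nonneg (my_mul_algebraMap_nonneg hb hε.le).2
                (my_mul_algebraMap_nonneg hc0 hε.le).1)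
        _ = (b + c) * (b + c) := by noncomm_ring
    have := my_le_of_sq_le_sq_unit (b := u) ha hbu habu
    rwa [hu] at this
  have hseq : ∀ n : ℕ, a ≤ b + algebraMap ℝ A (1 / ((n : ℝ) + 1)) :=
    fun n => key _ (by positivity)
  have htend : Tendsto (fun n : ℕ => b + algebraMap ℝ A (1 / ((n : ℝ) + 1))) atTop (𝓝 b) := by
    have h0 : Tendsto (fun n : ℕ => 1 / ((n : ℝ) + 1)) atTop (𝓝 0) :=
      tendsto_one_div_add_atTop_nhds_zero_nat
    have h1 := ((continuous_algebraMap ℝ A).tendsto 0).comp h0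
    simpa using tendsto_const_nhds.add h1
  exact le_of_tendsto_of_tendsto' tendsto_const_nhds htend hseq

private lemma my_clm_nonneg_iff {H : Type*} [NormedAddCommGroup H] [InnerProductSpace ℂ H]
    [CompleteSpace H] (T : H →L[ℂ] H) :
    0 ≤ T ↔ ∀ x : H, 0 ≤ (inner ℂ (T x) x : ℂ) := by
  rw [nonneg_iff_isPositive, isPositive_iff_complex]
  refine forall_congr' fun x => ?_
  constructor
  · rintro ⟨h1, h2⟩
    rw [← h1]
    simp only [RCLike.re_to_complex] at h2 ⊢
    exact_mod_cast h2
  · intro h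
    rw [Complex.le_def] at h
    simp only [Complex.zero_re, Complex.zero_im] at h
    refine ⟨?_, by simpa using h.1⟩
    apply Complex.ext <;> simp [← h.2]

/-- If `A` is positive then `|(AK)*| ≤ ‖K‖ A`, i.e. `‖K‖ A − |(AK)*|` is a positive
operator, where `|(AK)*|` (here called `B`) is the unique positive square root of
`((AK)*)* (AK)* = (AK)(AK)*`. -/
theorem abs_adjoint_prod_le
    {H : Type*} [NormedAddCommGroup H] [InnerProductSpace ℂ H] [CompleteSpace H]
    (A K : H →L[ℂ] H)
    (hA : ∀ x : H, 0 ≤ (inner ℂ (A x) x : ℂ))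
    (B : H →L[ℂ] H)
    (hB : ∀ x : H, 0 ≤ (inner ℂ (B x) x : ℂ))
    (hB2 : B ∘L B = adjoint (adjoint (A ∘L K)) ∘L adjoint (A ∘L K)) :
    ∀ x : H, 0 ≤ (inner ℂ ((‖K‖ • A - B) x) x : ℂ) := by
  have hA' : (0 : H →L[ℂ] H) ≤ A := (my_clm_nonneg_iff A).mpr hA
  have hB' : (0 : H →L[ℂ] H) ≤ B := (my_clm_nonneg_iff B).mpr hB
  have hAsa : IsSelfAdjoint A := IsSelfAdjoint.of_nonneg hA'
  have h5 : adjoint (A ∘L K) = star K * A := by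
    rw [show A ∘L K = A * K from rfl, ← star_eq_adjoint, star_mul, hAsa.star_eq]
  have hBB : B * B = A * (K * star K) * A := by
    have e : B * B = (A ∘L K) ∘L (star K * A) := by
      rw [show B * B = B ∘L B from rfl, hB2, adjoint_adjoint, h5]
    rw [e, show (A ∘L K) ∘L (star K * A) = A * K * (star K * A) from rfl]
    noncomm_ring
  set c := algebraMap ℝ (H →L[ℂ] H) ‖K‖ with hcdef
  have hCeq : ‖K‖ • A = c * A := by
    rw [hcdef, Algebra.algebraMap_eq_smul_one, smul_mul_assoc, one_mul]
  have hC' : (0 : H →L[ℂ] H) ≤ ‖K‖ • A := by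
    rw [hCeq]
    exact (my_mul_algebraMap_nonneg hA' (norm_nonneg K)).2
  have hKK : K * star K ≤ algebraMap ℝ (H →L[ℂ] H) (‖K‖ * ‖K‖) := by
    have h := IsSelfAdjoint.le_algebraMap_norm_self (a := K * star K)
      (IsSelfAdjoint.mul_star_self K)
    rwa [CStarRing.norm_self_mul_star] at h
  have hsq : B * B ≤ (‖K‖ • A) * (‖K‖ • A) := by
    have hconj : A * (K * star K) * A ≤ A * algebraMap ℝ (H →L[ℂ] H) (‖K‖ * ‖K‖) * A :=
      hAsa.conjugate_le_conjugate hKK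
    have hCC : (‖K‖ • A) * (‖K‖ • A) = A * algebraMap ℝ (H →L[ℂ] H) (‖K‖ * ‖K‖) * A := by
      rw [hCeq, map_mul]
      have hcm : c * A = A * c := Algebra.commutes _ A
      calc (c * A) * (c * A) = (A * c) * (c * A) := by rw [hcm]
        _ = A * (c * c) * A := by noncomm_ring
    rw [hBB, hCC]
    exact hconj
  have hle : B ≤ ‖K‖ • A := my_le_of_sq_le_sq hB' hC' hsq
  exact (my_clm_nonneg_iff _).mp (sub_nonneg.mpr hle)
end

section
/- Let S be the unilateral (right) shift operator on ℓ²(ℕ) (the operator sending (x₀, x₁, x₂, …) to (0, x₀, x₁, …)), and set A = SS* and K = S. Then A is positive, AK = S is hyponormal, ‖K‖ = 1, and the Reid inequality fails: there exists x ∈ ℓ²(ℕ) with |⟨AKx, x⟩| > ‖K‖ · ⟨Ax, x⟩; in fact for x = (2, 1, 0, 0, …) one has |⟨Sx, x⟩| = 2 while ⟨SS*x, x⟩ = ‖S*x‖² = 1. -/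
set_option maxHeartbeats 1000000


open ComplexOrder ContinuousLinearMap

/-- The unilateral right shift `S` on `ℓ²(ℕ)` (sending `(x₀, x₁, …)` to `(0, x₀, x₁, …)`),
with `A = S S*` and `K = S`, gives: `A` is positive, `AK = S`, `S` is hyponormal,
`‖K‖ = 1`, yet Reid's inequality fails: for `x = (2, 1, 0, 0, …)` one has
`|⟨Sx, x⟩| = 2` while `⟨SS*x, x⟩ = ‖S*x‖² = 1`; in particular there is an `x` with
`|⟨AKx, x⟩| > ‖K‖ · ⟨Ax, x⟩`. -/
theorem reid_fails_for_hyponormal_shift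
    (S : lp (fun _ : ℕ => ℂ) 2 →L[ℂ] lp (fun _ : ℕ => ℂ) 2)
    (hS0 : ∀ x : lp (fun _ : ℕ => ℂ) 2, S x 0 = 0)
    (hSsucc : ∀ (x : lp (fun _ : ℕ => ℂ) 2) (n : ℕ), S x (n + 1) = x n) :
    (∀ x : lp (fun _ : ℕ => ℂ) 2, 0 ≤ (inner ℂ ((S ∘L adjoint S) x) x : ℂ)) ∧
    (S ∘L adjoint S) ∘L S = S ∧
    (∀ x : lp (fun _ : ℕ => ℂ) 2,
      0 ≤ (inner ℂ ((adjoint S ∘L S - S ∘L adjoint S) x) x : ℂ)) ∧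
    ‖S‖ = 1 ∧
    (∀ x₀ : lp (fun _ : ℕ => ℂ) 2,
      x₀ = lp.single 2 0 (2 : ℂ) + lp.single 2 1 (1 : ℂ) →
      ‖(inner ℂ (S x₀) x₀ : ℂ)‖ = 2 ∧
      (inner ℂ ((S ∘L adjoint S) x₀) x₀ : ℂ) = 1 ∧
      ‖adjoint S x₀‖ ^ 2 = 1) ∧
    ∃ x : lp (fun _ : ℕ => ℂ) 2,
      ‖(inner ℂ (((S ∘L adjoint S) ∘L S) x) x : ℂ)‖ >
        ‖S‖ * (inner ℂ ((S ∘L adjoint S) x) x : ℂ).re := by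
  -- S preserves inner products
  have hinner : ∀ x y : lp (fun _ : ℕ => ℂ) 2, (inner ℂ (S x) (S y) : ℂ) = inner ℂ x y := by
    intro x y
    rw [lp.inner_eq_tsum, lp.inner_eq_tsum]
    have hrange : Function.support (fun n => (inner ℂ (S x n) (S y n) : ℂ)) ⊆
        Set.range Nat.succ := by
      intro n hn
      rcases n with _ | m
      · exfalso; apply hn; simp [hS0]
      · exact ⟨m, rfl⟩
    have := Function.Injective.tsum_eq (g := Nat.succ)
      (f := fun n => (inner ℂ (S x n) (S y n) : ℂ)) Nat.succ_injective hrange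
    rw [← this]
    congr 1
    funext n
    simp [hSsucc]
  -- S* S = 1
  have hSS : ∀ x : lp (fun _ : ℕ => ℂ) 2, adjoint S (S x) = x := by
    intro x
    refine ext_inner_right ℂ fun y => ?_
    rw [adjoint_inner_left, hinner]
  -- ⟨S S* x, x⟩ = ‖S* x‖²
  have hA : ∀ x : lp (fun _ : ℕ => ℂ) 2, (inner ℂ ((S ∘L adjoint S) x) x : ℂ) = ((‖adjoint S x‖ : ℂ)) ^ 2 := by
    intro x
    have : (inner ℂ ((S ∘L adjoint S) x) x : ℂ) = inner ℂ (adjoint S x) (adjoint S x) := by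
      rw [ContinuousLinearMap.comp_apply, ← adjoint_inner_right]
    rw [this, inner_self_eq_norm_sq_to_K]
    norm_cast
  -- positivity of A = S S*
  have hpos : ∀ x : lp (fun _ : ℕ => ℂ) 2, 0 ≤ (inner ℂ ((S ∘L adjoint S) x) x : ℂ) := by
    intro x
    rw [hA x]
    have : ((‖adjoint S x‖ : ℂ)) ^ 2 = ((‖adjoint S x‖ ^ 2 : ℝ) : ℂ) := by push_cast; ring
    rw [this]
    exact_mod_cast Complex.zero_le_real.2 (by positivity)
  -- S preserves norms
  have hnormS : ∀ x : lp (fun _ : ℕ => ℂ) 2, ‖S x‖ = ‖x‖ := by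
    intro x
    have h2 := hinner x x
    rw [inner_self_eq_norm_sq_to_K, inner_self_eq_norm_sq_to_K] at h2
    have h2' : ‖S x‖ ^ 2 = ‖x‖ ^ 2 := by exact_mod_cast h2
    rw [← Real.sqrt_sq (norm_nonneg (S x)), ← Real.sqrt_sq (norm_nonneg x), h2']
  -- AK = S
  have hcomp : (S ∘L adjoint S) ∘L S = S := by
    ext x
    simp [hSS]
  -- ‖S‖ = 1
  have h1 : ‖(lp.single 2 0 (1 : ℂ) : lp (fun _ : ℕ => ℂ) 2)‖ = 1 := by
    have := lp.norm_single (p := 2) (E := fun _ : ℕ => ℂ) (by norm_num)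
      0 (1 : ℂ)
    simpa using this
  have hnorm : ‖S‖ = 1 := by
    refine le_antisymm (opNorm_le_bound _ zero_le_one fun x => by
      rw [hnormS, one_mul]) ?_
    have := (S.le_opNorm (lp.single 2 0 (1 : ℂ)))
    rw [hnormS, h1, mul_one] at this
    exact this
  -- ‖S* x‖ ≤ ‖x‖
  have hadjnorm : ∀ x : lp (fun _ : ℕ => ℂ) 2, ‖adjoint S x‖ ≤ ‖x‖ := by
    intro x
    have := (adjoint S).le_opNorm x
    have hn : ‖adjoint S‖ = ‖S‖ := LinearIsometryEquiv.norm_map adjoint S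
    rwa [hn, hnorm, one_mul] at this
  -- hyponormality
  have hhypo : ∀ x : lp (fun _ : ℕ => ℂ) 2, 0 ≤ (inner ℂ ((adjoint S ∘L S - S ∘L adjoint S) x) x : ℂ) := by
    intro x
    have heq : (inner ℂ ((adjoint S ∘L S - S ∘L adjoint S) x) x : ℂ)
        = ((‖x‖ ^ 2 - ‖adjoint S x‖ ^ 2 : ℝ) : ℂ) := by
      rw [ContinuousLinearMap.sub_apply, inner_sub_left]
      have h1' : (inner ℂ ((adjoint S ∘L S) x) x : ℂ) = ((‖x‖ : ℂ)) ^ 2 := by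
        rw [ContinuousLinearMap.comp_apply, hSS, inner_self_eq_norm_sq_to_K]
        norm_cast
      rw [h1', hA]
      push_cast
      ring
    rw [heq]
    refine Complex.zero_le_real.2 ?_
    have := hadjnorm x
    nlinarith [norm_nonneg (adjoint S x), norm_nonneg x]
  -- action on basis vectors
  have hSsingle : ∀ (n : ℕ) (c : ℂ), S (lp.single 2 n c) = lp.single 2 (n + 1) c := by
    intro n c
    refine lp.ext (funext fun j => ?_)
    rcases j with _ | m
    · rw [hS0]
      simp [lp.single_apply]
    · rw [hSsucc]
      by_cases h : m = n <;> simp [lp.single_apply, h]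
  have hadj0 : ∀ c : ℂ, adjoint S (lp.single 2 0 c) = 0 := by
    intro c
    refine ext_inner_right ℂ fun y => ?_
    rw [adjoint_inner_left, lp.inner_single_left, hS0, inner_zero_left, inner_zero_right]
  have hadjsucc : ∀ (n : ℕ) (c : ℂ), adjoint S (lp.single 2 (n + 1) c) = lp.single 2 n c := by
    intro n c
    refine ext_inner_right ℂ fun y => ?_
    rw [adjoint_inner_left, lp.inner_single_left, hSsucc, lp.inner_single_left]
  -- the specific vector computations
  have hx₀ : ∀ x₀ : lp (fun _ : ℕ => ℂ) 2,
      x₀ = lp.single 2 0 (2 : ℂ) + lp.single 2 1 (1 : ℂ) →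
      ‖(inner ℂ (S x₀) x₀ : ℂ)‖ = 2 ∧
      (inner ℂ ((S ∘L adjoint S) x₀) x₀ : ℂ) = 1 ∧
      ‖adjoint S x₀‖ ^ 2 = 1 := by
    intro x₀ hx
    have hadjx : adjoint S x₀ = lp.single 2 0 (1 : ℂ) := by
      rw [hx, map_add, hadj0, hadjsucc, zero_add]
    have hx1 : x₀ 1 = 1 := by
      rw [hx, lp.coeFn_add, Pi.add_apply]
      simp [lp.single_apply]
    have hx2 : x₀ 2 = 0 := by
      rw [hx, lp.coeFn_add, Pi.add_apply]
      simp [lp.single_apply]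
    have hSx₀ : S x₀ = lp.single 2 1 (2 : ℂ) + lp.single 2 2 (1 : ℂ) := by
      rw [hx, map_add, hSsingle, hSsingle]
    have hin : (inner ℂ (S x₀) x₀ : ℂ) = 2 := by
      rw [hSx₀, inner_add_left, lp.inner_single_left, lp.inner_single_left, hx1, hx2]
      simp [RCLike.inner_apply, Complex.conj_ofNat]
    have hadjn : ‖adjoint S x₀‖ = 1 := by rw [hadjx]; exact h1
    refine ⟨by rw [hin]; simp, ?_, by rw [hadjn]; norm_num⟩
    rw [hA, hadjn]
    norm_num
  refine ⟨hpos, hcomp, hhypo, hnorm, hx₀, ?_⟩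
  refine ⟨lp.single 2 0 (2 : ℂ) + lp.single 2 1 (1 : ℂ), ?_⟩
  obtain ⟨hab, hre, -⟩ := hx₀ _ rfl
  have hLHS : (((S ∘L adjoint S) ∘L S) (lp.single 2 0 (2 : ℂ) + lp.single 2 1 (1 : ℂ)))
      = S (lp.single 2 0 (2 : ℂ) + lp.single 2 1 (1 : ℂ)) := by rw [hcomp]
  rw [hLHS, hab, hnorm, hre]
  norm_num
end
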